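/- arXiv:1507.02972 — 3 statements merged into one kernel-verified Lean document; each statement's English description precedes it below -/
import Mathlib

section
/- For every $\epsilon > 0$ there exists $r \in \mathbb{N}$ such that for any integers $n, n_0$ with $n \geq r\, n_0$, there is a finite sequence of integers $m_0 < m_1 < \dots < m_k$ with $m_0 = n_0$, $m_k = n$, and $|m_i - 2 m_{i-1}| < \epsilon\, m_i$ for all $1 \leq i \leq k$. -/
open MeasureTheory Filter Topology

noncomputable section

/-- `b` is reachable from `a` by an `ε`-doubling sequence. -/
def DReach (ε : ℝ) (a b : ℕ) : Prop :=
  ∃ (k : ℕ) (mseq : ℕ → ℕ), 1 ≤ k ∧ mseq 0 = a ∧ mseq k = b ∧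
    (∀ i, i < k → mseq i < mseq (i + 1)) ∧
    (∀ i, 1 ≤ i → i ≤ k → |(mseq i : ℝ) - 2 * (mseq (i - 1) : ℝ)| < ε * (mseq i : ℝ))

lemma DReach.single {ε : ℝ} {a b : ℕ} (hab : a < b)
    (h : |(b : ℝ) - 2 * (a : ℝ)| < ε * b) : DReach ε a b := by
  refine ⟨1, fun i => if i = 0 then a else b, le_refl 1, by simp, by simp, ?_, ?_⟩
  · intro i hi
    interval_cases i
    simpa using hab
  · intro i hi1 hi2
    have hi : i = 1 := le_antisymm hi2 hi1
    subst hi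
    simpa using h

lemma DReach.extend {ε : ℝ} {a b c : ℕ} (h1 : DReach ε a b) (hbc : b < c)
    (h : |(c : ℝ) - 2 * (b : ℝ)| < ε * c) : DReach ε a c := by
  obtain ⟨k, s, hk, h0, hkb, hmono, habs⟩ := h1
  refine ⟨k + 1, fun i => if i ≤ k then s i else c, by omega, ?_, ?_, ?_, ?_⟩
  · simp [Nat.zero_le, h0]
  · simp
  · intro i hi
    by_cases hik : i + 1 ≤ k
    · simp only [if_pos (by omega : i ≤ k), if_pos hik]
      exact hmono i (by omega)
    · have hik' : i = k := by omega
      rw [hik']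
      show (if k ≤ k then s k else c) < (if k + 1 ≤ k then s (k + 1) else c)
      rw [if_pos (le_refl k), if_neg (by omega : ¬ k + 1 ≤ k), hkb]
      exact hbc
  · intro i hi1 hi2
    by_cases hik : i ≤ k
    · simp only [if_pos hik, if_pos (by omega : i - 1 ≤ k)]
      exact habs i hi1 hik
    · have hik' : i = k + 1 := by omega
      subst hik'
      simp only [if_neg (by omega : ¬ k + 1 ≤ k), if_pos (by omega : k + 1 - 1 ≤ k)]
      simpa [hkb] using h

/-- Exact doubling `j` times is an `ε`-doubling sequence. -/
lemma DReach.double {ε : ℝ} (hε : 0 < ε) {a : ℕ} (ha : 1 ≤ a) :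
    ∀ j : ℕ, 1 ≤ j → DReach ε a (a * 2 ^ j) := by
  have hstep : ∀ m : ℕ, 1 ≤ m →
      (m < 2 * m ∧ |((2 * m : ℕ) : ℝ) - 2 * (m : ℝ)| < ε * ((2 * m : ℕ) : ℝ)) := by
    intro m hm
    refine ⟨by omega, ?_⟩
    push_cast
    rw [show (2 : ℝ) * m - 2 * m = 0 by ring, abs_zero]
    have : (0 : ℝ) < m := by exact_mod_cast hm
    positivity
  intro j hj
  induction j with
  | zero => omega
  | succ j ih =>
    by_cases hj0 : j = 0
    · subst hj0
      have h := hstep a ha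
      rw [show a * 2 ^ 1 = 2 * a by ring]
      exact DReach.single h.1 h.2
    · have ih' := ih (by omega)
      have hm : 1 ≤ a * 2 ^ j := Nat.one_le_iff_ne_zero.mpr (by positivity)
      have h := hstep (a * 2 ^ j) hm
      rw [show a * 2 ^ (j + 1) = 2 * (a * 2 ^ j) by ring]
      exact DReach.extend ih' h.1 h.2

/-- Upper end of the reachable interval after `k` flexible steps from `N`. -/
def hAux (N c : ℕ) : ℕ → ℕ
  | 0 => N
  | k + 1 => 2 * hAux N c k + 2 ^ k * N / c

lemma hAux_ge (N c : ℕ) : ∀ k, 2 ^ k * N ≤ hAux N c k := by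
  intro k
  induction k with
  | zero => simp [hAux]
  | succ k ih =>
    calc 2 ^ (k + 1) * N = 2 * (2 ^ k * N) := by ring
      _ ≤ 2 * hAux N c k := Nat.mul_le_mul_left 2 ih
      _ ≤ hAux N c (k + 1) := by rw [hAux]; exact Nat.le_add_right _ _

lemma hAux_key (N c : ℕ) : ∀ k, 2 ^ (k + 1) * N + k * (2 ^ k * (N / c)) ≤ 2 * hAux N c k := by
  intro k
  induction k with
  | zero => simp [hAux]
  | succ k ih =>
    have hdiv : 2 ^ k * (N / c) ≤ 2 ^ k * N / c := Nat.mul_div_le_mul_div_assoc _ _ _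
    have e1 : 2 * hAux N c (k + 1) = 2 * (2 * hAux N c k) + 2 * (2 ^ k * N / c) := by
      rw [hAux]; ring
    have e2 : 2 ^ (k + 1 + 1) * N + (k + 1) * (2 ^ (k + 1) * (N / c)) =
        2 * (2 ^ (k + 1) * N + k * (2 ^ k * (N / c))) + 2 * (2 ^ k * (N / c)) := by ring
    rw [e1, e2]
    exact Nat.add_le_add (Nat.mul_le_mul_left 2 ih) (Nat.mul_le_mul_left 2 hdiv)

lemma hAux_big (N c : ℕ) (hc : 1 ≤ c) (hcN : c ≤ N) {k : ℕ} (hk : 4 * c ≤ k) :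
    2 ^ (k + 1) * N ≤ hAux N c k := by
  have hkey := hAux_key N c k
  set d := N / c with hd
  have h1 : 1 ≤ d := (Nat.one_le_div_iff hc).mpr hcN
  have h2 : N ≤ 2 * (c * d) := by
    have hmod : N % c < c := Nat.mod_lt _ hc
    have hdm : c * d + N % c = N := by rw [hd]; exact Nat.div_add_mod N c
    have hcd : c ≤ c * d := Nat.le_mul_of_pos_right c h1
    calc N = c * d + N % c := hdm.symm
      _ ≤ c * d + c * d := Nat.add_le_add_left (le_trans hmod.le hcd) _
      _ = 2 * (c * d) := by ring
  have h3 : 2 ^ (k + 1) * N ≤ k * (2 ^ k * d) := by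
    calc 2 ^ (k + 1) * N = 2 ^ k * (2 * N) := by ring
      _ ≤ 2 ^ k * (4 * (c * d)) := Nat.mul_le_mul_left _ (by omega)
      _ = (4 * c) * (2 ^ k * d) := by ring
      _ ≤ k * (2 ^ k * d) := Nat.mul_le_mul_right _ hk
  omega

/-- For every `ε > 0` there exists `r ∈ ℕ` such that for any integers `n, n₀` with
`n ≥ r n₀`, there is a finite strictly increasing sequence of integers
`m₀ < m₁ < ⋯ < m_k` with `m₀ = n₀`, `m_k = n`, and `|m_i - 2 m_{i-1}| < ε m_i`
for all `1 ≤ i ≤ k` (an `ε`-doubling sequence interpolating between `n₀` and `n`). -/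
theorem exists_doubling_sequence (ε : ℝ) (hε : 0 < ε) :
    ∃ r : ℕ, ∀ n n₀ : ℕ, 1 ≤ n₀ → r * n₀ ≤ n →
      ∃ (k : ℕ) (mseq : ℕ → ℕ), 1 ≤ k ∧ mseq 0 = n₀ ∧ mseq k = n ∧
        (∀ i, i < k → mseq i < mseq (i + 1)) ∧
        (∀ i, 1 ≤ i → i ≤ k → |(mseq i : ℝ) - 2 * (mseq (i - 1) : ℝ)| < ε * (mseq i : ℝ)) := by
  -- choose c with 1/c ≤ ε
  set c : ℕ := max 1 ⌈1 / ε⌉₊ with hc_def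
  have hc1 : 1 ≤ c := le_max_left _ _
  have hcpos : (0 : ℝ) < c := by exact_mod_cast hc1
  have hcε : (1 : ℝ) / c ≤ ε := by
    rw [div_le_iff₀ hcpos]
    have h1 : (1 : ℝ) / ε ≤ (⌈1 / ε⌉₊ : ℕ) := Nat.le_ceil _
    have h2 : ((⌈1 / ε⌉₊ : ℕ) : ℝ) ≤ c := by exact_mod_cast le_max_right 1 ⌈1 / ε⌉₊
    have h3 : (1 : ℝ) / ε ≤ c := h1.trans h2
    rw [div_le_iff₀ hε] at h3
    nlinarith
  refine ⟨2 ^ (5 * c), ?_⟩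
  intro n n₀ hn₀ hrn
  set N : ℕ := n₀ * 2 ^ c with hN_def
  have hN1 : 1 ≤ N := Nat.one_le_iff_ne_zero.mpr (by positivity)
  have hcN : c ≤ N := by
    calc c ≤ 2 ^ c := (Nat.lt_two_pow_self (n := c)).le
      _ ≤ n₀ * 2 ^ c := Nat.le_mul_of_pos_left _ hn₀
  -- the key interval lemma: everything in [2^k N, hAux N c k] is reachable
  have main : ∀ k m, 2 ^ k * N ≤ m → m ≤ hAux N c k → DReach ε n₀ m := by
    intro k
    induction k with
    | zero =>
      intro m hm1 hm2
      simp only [hAux, pow_zero, one_mul] at hm1 hm2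
      have hm : m = N := le_antisymm hm2 hm1
      subst hm
      exact DReach.double hε hn₀ c hc1
    | succ k ih =>
      intro m hm1 hm2
      set m' : ℕ := min (m / 2) (hAux N c k) with hm'_def
      have hm'lo : 2 ^ k * N ≤ m' := by
        refine le_min ?_ (hAux_ge N c k)
        have h : 2 * (2 ^ k * N) ≤ m := by
          calc 2 * (2 ^ k * N) = 2 ^ (k + 1) * N := by ring
            _ ≤ m := hm1
        omega
      have hm'hi : m' ≤ hAux N c k := min_le_right _ _
      have hreach : DReach ε n₀ m' := ih m' hm'lo hm'hi
      have h2m' : 2 * m' ≤ m := by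
        have := min_le_left (m / 2) (hAux N c k)
        omega
      have hm'c : c ≤ m' := by
        refine le_trans hcN (le_trans ?_ hm'lo)
        exact Nat.le_mul_of_pos_left _ (Nat.pow_pos (by norm_num))
      have hdivmono : 2 ^ k * N / c ≤ m' / c := Nat.div_le_div_right hm'lo
      have h1c : 1 ≤ m' / c := (Nat.one_le_div_iff (by omega)).mpr hm'c
      have hub : m ≤ 2 * m' + m' / c := by
        rcases le_or_gt (hAux N c k) (m / 2) with hcase | hcase
        · have hm'eq : m' = hAux N c k := by rw [hm'_def, min_eq_right hcase]
          calc m ≤ 2 * hAux N c k + 2 ^ k * N / c := by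
                have : hAux N c (k + 1) = 2 * hAux N c k + 2 ^ k * N / c := rfl
                omega
            _ = 2 * m' + 2 ^ k * N / c := by rw [hm'eq]
            _ ≤ 2 * m' + m' / c := Nat.add_le_add_left hdivmono _
        · have hm'eq : m' = m / 2 := by rw [hm'_def, min_eq_left hcase.le]
          obtain ⟨u, hu⟩ : ∃ u, m' / c = u := ⟨_, rfl⟩
          rw [hu] at h1c ⊢
          omega
      have hm'ltm : m' < m := by
        have hm1' : 1 ≤ m := le_trans hN1 (le_trans (Nat.le_mul_of_pos_left _ (Nat.pow_pos (by norm_num))) hm1)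
        omega
      have hstep : |(m : ℝ) - 2 * (m' : ℝ)| < ε * m := by
        have hsub : m - 2 * m' ≤ m' / c := Nat.sub_le_iff_le_add.mpr (hub.trans_eq (Nat.add_comm _ _))
        have hcast1 : (m : ℝ) - 2 * (m' : ℝ) = ((m - 2 * m' : ℕ) : ℝ) := by
          push_cast [h2m']
          ring
        have hnn : (0 : ℝ) ≤ (m : ℝ) - 2 * (m' : ℝ) := by
          rw [hcast1]; positivity
        rw [abs_of_nonneg hnn, hcast1]
        have hb1 : ((m - 2 * m' : ℕ) : ℝ) ≤ ((m' / c : ℕ) : ℝ) := by exact_mod_cast hsub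
        have hb2 : ((m' / c : ℕ) : ℝ) ≤ (m' : ℝ) / (c : ℝ) := Nat.cast_div_le
        have hb3 : (m' : ℝ) / (c : ℝ) ≤ ε * m' := by
          rw [div_eq_mul_one_div]
          calc (m' : ℝ) * (1 / c) ≤ (m' : ℝ) * ε :=
              mul_le_mul_of_nonneg_left hcε (by positivity)
            _ = ε * m' := by ring
        have hb4 : ε * (m' : ℝ) < ε * m := by
          apply mul_lt_mul_of_pos_left _ hε
          exact_mod_cast hm'ltm
        linarith
      exact DReach.extend hreach hm'ltm hstep
  -- locate n in one of the intervals
  have hnN : 2 ^ (4 * c) * N ≤ n := by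
    have h5 : 2 ^ (5 * c) * n₀ = 2 ^ (4 * c) * N := by
      rw [hN_def, show 5 * c = 4 * c + c from by ring, pow_add]
      ring
    omega
  have hNpos : 0 < N := hN1
  set q : ℕ := n / N with hq_def
  have hq1 : 2 ^ (4 * c) ≤ q := (Nat.le_div_iff_mul_le hNpos).mpr hnN
  have hqpos : q ≠ 0 := by
    have : (0 : ℕ) < 2 ^ (4 * c) := Nat.pow_pos (by norm_num)
    omega
  set k : ℕ := Nat.log 2 q with hk_def
  have hklo : 2 ^ k ≤ q := Nat.pow_log_le_self 2 hqpos
  have hkhi : q < 2 ^ (k + 1) := Nat.lt_pow_succ_log_self (by norm_num) q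
  have hk4c : 4 * c ≤ k := by
    have h1 : 2 ^ (4 * c) < 2 ^ (k + 1) := lt_of_le_of_lt hq1 hkhi
    have h2 := (Nat.pow_lt_pow_iff_right (by norm_num : 1 < 2)).mp h1
    omega
  have hnlo : 2 ^ k * N ≤ n := by
    calc 2 ^ k * N ≤ q * N := Nat.mul_le_mul_right N hklo
      _ ≤ n := Nat.div_mul_le_self n N
  have hnhi : n < 2 ^ (k + 1) * N := by
    have hmod : n % N < N := Nat.mod_lt _ hNpos
    have hdm := Nat.div_add_mod n N
    calc n = N * q + n % N := hdm.symm
      _ < N * q + N := by omega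
      _ = (q + 1) * N := by ring
      _ ≤ 2 ^ (k + 1) * N := Nat.mul_le_mul_right N hkhi
  have hnh : n ≤ hAux N c k := le_trans hnhi.le (hAux_big N c hc1 hcN hk4c)
  exact main k n hnlo hnh
end
end

section
/- Let $(X,\mu,T)$ be an ergodic measure-preserving system and $f: X \to \mathbb{R}$ a measurable function such that $f - f\circ T \in L^1(X,\mu)$. Then for $\mu$-almost every $x \in X$, $\lim_{n\to+\infty} \frac{1}{n} f(T^n x) = 0$. -/
open MeasureTheory Filter Topology Set ENNReal

noncomputable section

namespace ErgodicAuxProof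

variable {X : Type*} [MeasurableSpace X] {μ : Measure X} {T : X → X} {g : X → ℝ}

/-- Running maximum of the Birkhoff sums `S_0, S_1, ..., S_N` (includes `S_0 = 0`). -/
def maxSum (T : X → X) (g : X → ℝ) : ℕ → X → ℝ
  | 0 => fun _ => 0
  | (N + 1) => fun x => max (maxSum T g N x) (birkhoffSum T g (N + 1) x)

lemma maxSum_nonneg (N : ℕ) (x : X) : 0 ≤ maxSum T g N x := by
  induction N with
  | zero => exact le_refl _
  | succ N ih => exact le_trans ih (le_max_left _ _)

lemma birkhoffSum_le_maxSum {n N : ℕ} (h : n ≤ N) (x : X) :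
    birkhoffSum T g n x ≤ maxSum T g N x := by
  induction N with
  | zero =>
    obtain rfl : n = 0 := Nat.le_zero.1 h
    simp [maxSum, birkhoffSum_zero]
  | succ N ih =>
    rcases eq_or_lt_of_le h with rfl | h'
    · exact le_max_right _ _
    · exact (ih (Nat.lt_succ_iff.1 h')).trans (le_max_left _ _)

lemma maxSum_key {N : ℕ} {x : X} (h : 0 < maxSum T g N x) :
    maxSum T g N x ≤ g x + maxSum T g N (T x) := by
  induction N with
  | zero => simp [maxSum] at h
  | succ N ih =>
    rcases le_total (birkhoffSum T g (N + 1) x) (maxSum T g N x) with hc | hc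
    · have hmax : maxSum T g (N + 1) x = maxSum T g N x := max_eq_left hc
      rw [hmax] at h ⊢
      exact (ih h).trans (add_le_add le_rfl (le_max_left _ _))
    · have hmax : maxSum T g (N + 1) x = birkhoffSum T g (N + 1) x := max_eq_right hc
      rw [hmax, birkhoffSum_succ']
      exact add_le_add le_rfl (birkhoffSum_le_maxSum (Nat.le_succ N) (T x))

lemma birkhoffSum_measurable (hT : Measurable T) (hg : Measurable g) (n : ℕ) :
    Measurable (birkhoffSum T g n) := by
  show Measurable fun x => ∑ k ∈ Finset.range n, g (T^[k] x)
  exact Finset.measurable_sum _ fun k _ => hg.comp (hT.iterate k)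

lemma birkhoffSum_integrable (hTm : MeasurePreserving T μ μ) (hgi : Integrable g μ) (n : ℕ) :
    Integrable (birkhoffSum T g n) μ := by
  have h : ∀ k : ℕ, Integrable (fun x => g (T^[k] x)) μ := fun k => by
    have := ((hTm.iterate k).integrable_comp hgi.aestronglyMeasurable).2 hgi
    exact this
  have := integrable_finset_sum (Finset.range n) (fun k _ => h k)
  exact this

lemma maxSum_measurable (hT : Measurable T) (hg : Measurable g) (N : ℕ) :
    Measurable (maxSum T g N) := by
  induction N with
  | zero => exact measurable_const
  | succ N ih => exact ih.max (birkhoffSum_measurable hT hg (N + 1))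

lemma maxSum_integrable (hTm : MeasurePreserving T μ μ) (hgi : Integrable g μ) (N : ℕ) :
    Integrable (maxSum T g N) μ := by
  induction N with
  | zero =>
    have : Integrable (fun _ : X => (0 : ℝ)) μ := by simpa using integrable_zero X ℝ μ
    exact this
  | succ N ih =>
    have h := ih.sup (birkhoffSum_integrable hTm hgi (N + 1))
    have he : maxSum T g (N + 1) = (maxSum T g N) ⊔ (birkhoffSum T g (N + 1)) := by
      funext x
      simp [maxSum, Pi.sup_apply]
    rw [he]
    exact h

/-- The maximal ergodic theorem, in the form we need: if almost every point has some
positive Birkhoff sum, then the integral of `g` is nonnegative. -/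
lemma maximal (μ : Measure X) [IsProbabilityMeasure μ]
    (hTm : MeasurePreserving T μ μ) (hgm : Measurable g) (hgi : Integrable g μ)
    (hfull : ∀ᵐ x ∂μ, ∃ n, 1 ≤ n ∧ 0 < birkhoffSum T g n x) :
    0 ≤ ∫ x, g x ∂μ := by
  set A : ℕ → Set X := fun N => {x | 0 < maxSum T g N x} with hA
  have hQm : ∀ N, Measurable (maxSum T g N) := maxSum_measurable hTm.measurable hgm
  have hQi : ∀ N, Integrable (maxSum T g N) μ := maxSum_integrable hTm hgi
  have hAm : ∀ N, MeasurableSet (A N) := fun N => measurableSet_lt measurable_const (hQm N)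
  have hmono : Monotone A := monotone_nat_of_le_succ fun N x hx => by
    show (0 : ℝ) < maxSum T g (N + 1) x
    exact lt_of_lt_of_le hx (le_max_left _ _)
  have hstep : ∀ N, 0 ≤ ∫ x in A N, g x ∂μ := by
    intro N
    set P : X → ℝ := maxSum T g N with hP
    have hPi : Integrable P μ := hQi N
    have hPm : Measurable P := hQm N
    have hPTi : Integrable (fun x => P (T x)) μ := by
      have := (hTm.integrable_comp hPi.aestronglyMeasurable).2 hPi
      exact this
    have key : ∀ x ∈ A N, P x - P (T x) ≤ g x := fun x hx => by
      have h := maxSum_key (N := N) (x := x) hx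
      linarith
    have h2 : ∫ x in A N, (P x - P (T x)) ∂μ ≤ ∫ x in A N, g x ∂μ :=
      setIntegral_mono_on (hPi.sub hPTi).integrableOn hgi.integrableOn (hAm N) key
    have h3 : ∫ x in A N, (P x - P (T x)) ∂μ
        = (∫ x in A N, P x ∂μ) - ∫ x in A N, P (T x) ∂μ :=
      integral_sub hPi.integrableOn hPTi.integrableOn
    have h4 : ∫ x in A N, P x ∂μ = ∫ x, P x ∂μ := by
      have hEq : EqOn P (fun _ => (0 : ℝ)) (A N)ᶜ := fun x hx =>
        le_antisymm (not_lt.1 hx) (maxSum_nonneg N x)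
      have hcompl : ∫ x in (A N)ᶜ, P x ∂μ = 0 := by
        rw [setIntegral_congr_fun (hAm N).compl hEq]
        simp
      have hadd := integral_add_compl (hAm N) hPi
      linarith
    have h5 : ∫ x in A N, P (T x) ∂μ ≤ ∫ x, P (T x) ∂μ :=
      setIntegral_le_integral hPTi (Eventually.of_forall fun x => maxSum_nonneg N (T x))
    have h6 : ∫ x, P (T x) ∂μ = ∫ x, P x ∂μ := by
      have := integral_map (μ := μ) hTm.aemeasurable hPm.aestronglyMeasurable
      rw [hTm.map_eq] at this
      exact this.symm
    linarith
  have hUnion : ∀ᵐ x ∂μ, x ∈ ⋃ N, A N := by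
    filter_upwards [hfull] with x hx
    obtain ⟨n, _, hn⟩ := hx
    exact mem_iUnion.2 ⟨n, lt_of_lt_of_le hn (birkhoffSum_le_maxSum le_rfl x)⟩
  have hlim := tendsto_setIntegral_of_monotone hAm hmono hgi.integrableOn
  have h1 : 0 ≤ ∫ x in ⋃ N, A N, g x ∂μ := ge_of_tendsto' hlim hstep
  have hU0 : μ (⋃ N, A N)ᶜ = 0 := by
    have h := hUnion
    rw [ae_iff] at h
    exact h
  have hfullint : ∫ x in ⋃ N, A N, g x ∂μ = ∫ x, g x ∂μ := by
    rw [setIntegral_congr_set (MeasureTheory.ae_eq_univ.2 hU0), setIntegral_univ]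
  rwa [hfullint] at h1

/-- Half of Birkhoff's theorem: the `limsup` of Birkhoff averages is a.e. at most `∫ g`. -/
lemma limsup_birkhoff_le (μ : Measure X) [IsProbabilityMeasure μ]
    (hT : Ergodic T μ) (hgm : Measurable g) (hgi : Integrable g μ) :
    ∀ᵐ x ∂μ, limsup (fun n : ℕ => ((birkhoffSum T g n x / n : ℝ) : EReal)) atTop
      ≤ ((∫ x, g x ∂μ : ℝ) : EReal) := by
  set c : ℝ := ∫ x, g x ∂μ with hc
  have hTm := hT.toMeasurePreserving
  have key : ∀ K : ℝ, c < K →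
      ∀ᵐ x ∂μ, limsup (fun n : ℕ => ((birkhoffSum T g n x / n : ℝ) : EReal)) atTop
        ≤ (K : EReal) := by
    intro K hK
    set E : Set X := {x | ∀ C : ℕ, ∃ n : ℕ, (C : ℝ) < birkhoffSum T g n x - K * n} with hE
    have hEmem : ∀ x, x ∈ E ↔ ∀ C : ℝ, ∃ n : ℕ, C < birkhoffSum T g n x - K * n := by
      intro x
      constructor
      · intro hx C
        obtain ⟨m, hm⟩ := exists_nat_gt C
        obtain ⟨n, hn⟩ := hx m
        exact ⟨n, hm.trans hn⟩
      · intro hx C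
        exact hx C
    have hshift : ∀ (x : X) (n : ℕ), birkhoffSum T g n (T x) = birkhoffSum T g (n + 1) x - g x := by
      intro x n
      rw [birkhoffSum_succ']
      ring
    have hEinv : T ⁻¹' E = E := by
      ext x
      simp only [mem_preimage]
      rw [hEmem, hEmem]
      constructor
      · intro hx C
        obtain ⟨m, hm⟩ := hx (C - g x + K)
        rw [hshift x m] at hm
        refine ⟨m + 1, ?_⟩
        push_cast at hm ⊢
        linarith
      · intro hx C
        obtain ⟨n, hn⟩ := hx (max (C + g x - K) 0)
        have hn0 : n ≠ 0 := by
          rintro rfl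
          simp only [birkhoffSum_zero, Nat.cast_zero, mul_zero, sub_zero] at hn
          have := le_max_right (C + g x - K) (0 : ℝ)
          linarith
        obtain ⟨m, rfl⟩ := Nat.exists_eq_succ_of_ne_zero hn0
        refine ⟨m, ?_⟩
        rw [hshift x m]
        have h1 : C + g x - K ≤ max (C + g x - K) 0 := le_max_left _ _
        push_cast at hn ⊢
        linarith
    have hEmeas : MeasurableSet E := by
      have hbm : ∀ n : ℕ, Measurable fun x => birkhoffSum T g n x - K * n := fun n =>
        (birkhoffSum_measurable hTm.measurable hgm n).sub measurable_const
      have hEeq : E = ⋂ C : ℕ, ⋃ n : ℕ, {x | (C : ℝ) < birkhoffSum T g n x - K * n} := by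
        ext x
        simp [hE, Set.mem_iInter, Set.mem_iUnion]
      rw [hEeq]
      exact MeasurableSet.iInter fun C => MeasurableSet.iUnion fun n =>
        measurableSet_lt measurable_const (hbm n)
    have hE0 : μ E = 0 := by
      rcases hT.toPreErgodic.measure_self_or_compl_eq_zero hEmeas hEinv with h | h
      · exact h
      · exfalso
        have hae : ∀ᵐ x ∂μ, x ∈ E := by
          rw [ae_iff]
          exact h
        have hsum : ∀ (n : ℕ) (x : X),
            birkhoffSum T (fun y => g y - K) n x = birkhoffSum T g n x - n * K := by
          intro n x
          simp [birkhoffSum, Finset.sum_sub_distrib, Finset.sum_const, Finset.card_range,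
            nsmul_eq_mul]
        have hfull : ∀ᵐ x ∂μ, ∃ n, 1 ≤ n ∧ 0 < birkhoffSum T (fun y => g y - K) n x := by
          filter_upwards [hae] with x hx
          obtain ⟨n, hn⟩ := hx 0
          have hn0 : n ≠ 0 := by
            rintro rfl
            simp at hn
          refine ⟨n, Nat.one_le_iff_ne_zero.2 hn0, ?_⟩
          rw [hsum n x]
          push_cast at hn ⊢
          linarith
        have hmax := maximal μ hTm (hgm.sub measurable_const)
          (hgi.sub (integrable_const K)) hfull
        simp only [Pi.sub_apply] at hmax
        rw [integral_sub hgi (integrable_const K), integral_const] at hmax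
        simp only [probReal_univ, one_smul] at hmax
        linarith
    have hout : ∀ᵐ x ∂μ, x ∉ E := by
      rw [ae_iff]
      have : {x | ¬ x ∉ E} = E := by ext x; simp
      rwa [this]
    filter_upwards [hout] with x hx
    simp only [hE, mem_setOf_eq, not_forall, not_exists, not_lt] at hx
    obtain ⟨C, hC⟩ := hx
    have hb : ∀ᶠ n : ℕ in atTop,
        ((birkhoffSum T g n x / n : ℝ) : EReal) ≤ ((K + (C : ℝ) / n : ℝ) : EReal) := by
      filter_upwards [eventually_ge_atTop 1] with n hn
      have hnpos : (0 : ℝ) < n := by exact_mod_cast hn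
      rw [EReal.coe_le_coe_iff, div_le_iff₀ hnpos]
      have hmul : (K + (C : ℝ) / n) * n = K * n + C := by
        field_simp
      rw [hmul]
      linarith [hC n]
    have hlim : Tendsto (fun n : ℕ => ((K + (C : ℝ) / n : ℝ) : EReal)) atTop
        (𝓝 ((K : ℝ) : EReal)) := by
      rw [EReal.tendsto_coe]
      simpa using tendsto_const_nhds.add (tendsto_const_div_atTop_nhds_zero_nat (C : ℝ))
    calc limsup (fun n : ℕ => ((birkhoffSum T g n x / n : ℝ) : EReal)) atTop
        ≤ limsup (fun n : ℕ => ((K + (C : ℝ) / n : ℝ) : EReal)) atTop := limsup_le_limsup hb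
      _ = (K : EReal) := hlim.limsup_eq
  have hcomb : ∀ᵐ x ∂μ, ∀ j : ℕ,
      limsup (fun n : ℕ => ((birkhoffSum T g n x / n : ℝ) : EReal)) atTop
        ≤ ((c + 1 / ((j : ℝ) + 1) : ℝ) : EReal) :=
    ae_all_iff.2 fun j => key _ (lt_add_of_pos_right c (by positivity))
  filter_upwards [hcomb] with x hx
  have hlim : Tendsto (fun j : ℕ => ((c + 1 / ((j : ℝ) + 1) : ℝ) : EReal)) atTop
      (𝓝 ((c : ℝ) : EReal)) := by
    rw [EReal.tendsto_coe]
    simpa using (tendsto_const_nhds (x := c)).add tendsto_one_div_add_atTop_nhds_zero_nat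
  exact ge_of_tendsto' hlim hx

/-- Birkhoff's pointwise ergodic theorem for an ergodic transformation. -/
lemma birkhoff_tendsto (μ : Measure X) [IsProbabilityMeasure μ]
    (hT : Ergodic T μ) (hgm : Measurable g) (hgi : Integrable g μ) :
    ∀ᵐ x ∂μ, Tendsto (fun n : ℕ => birkhoffSum T g n x / n) atTop (𝓝 (∫ x, g x ∂μ)) := by
  have h1 := limsup_birkhoff_le μ hT hgm hgi
  have h2 := limsup_birkhoff_le μ hT hgm.neg hgi.neg
  filter_upwards [h1, h2] with x hx1 hx2
  have hnegS : ∀ n : ℕ, birkhoffSum T (fun y => -g y) n x = -birkhoffSum T g n x := by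
    intro n
    simp [birkhoffSum]
  have e1 : (fun n : ℕ => ((birkhoffSum T (fun y => -g y) n x / n : ℝ) : EReal))
      = (- fun n : ℕ => ((birkhoffSum T g n x / n : ℝ) : EReal)) := by
    funext n
    simp [hnegS n, neg_div]
  change limsup (fun n : ℕ => ((birkhoffSum T (fun y => -g y) n x / n : ℝ) : EReal)) atTop
    ≤ ((∫ x, -g x ∂μ : ℝ) : EReal) at hx2
  rw [e1, EReal.limsup_neg, integral_neg, EReal.coe_neg, EReal.neg_le_neg_iff] at hx2
  have hle : liminf (fun n : ℕ => ((birkhoffSum T g n x / n : ℝ) : EReal)) atTop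
      ≤ limsup (fun n : ℕ => ((birkhoffSum T g n x / n : ℝ) : EReal)) atTop :=
    liminf_le_limsup
  have hliminf : liminf (fun n : ℕ => ((birkhoffSum T g n x / n : ℝ) : EReal)) atTop
      = ((∫ x, g x ∂μ : ℝ) : EReal) := le_antisymm (hle.trans hx1) hx2
  have hlimsup : limsup (fun n : ℕ => ((birkhoffSum T g n x / n : ℝ) : EReal)) atTop
      = ((∫ x, g x ∂μ : ℝ) : EReal) := le_antisymm hx1 (hx2.trans hle)
  have := tendsto_of_liminf_eq_limsup hliminf hlimsup
  exact EReal.tendsto_coe.1 this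

end ErgodicAuxProof

open ErgodicAuxProof

/-- Let `(X, μ, T)` be an ergodic measure-preserving system and `f : X → ℝ` measurable
with `f - f ∘ T ∈ L¹(μ)`. Then for `μ`-a.e. `x`, `(1/n) f(Tⁿ x) → 0`. -/
theorem tendsto_div_iterate_of_sub_comp_integrable
    {X : Type*} [MeasurableSpace X] (μ : Measure X) [IsProbabilityMeasure μ]
    (T : X → X) (hT : Ergodic T μ) (f : X → ℝ) (hf : Measurable f)
    (hL1 : Integrable (fun x => f x - f (T x)) μ) :
    ∀ᵐ x ∂μ, Filter.Tendsto (fun n : ℕ => f (T^[n] x) / (n : ℝ)) Filter.atTop (𝓝 0) := by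
  have hTm := hT.toMeasurePreserving
  have hgm : Measurable (fun x => f x - f (T x)) := hf.sub (hf.comp hTm.measurable)
  set c : ℝ := ∫ x, f x - f (T x) ∂μ with hc
  have htend := birkhoff_tendsto μ hT hgm hL1
  have htel : ∀ (n : ℕ) (x : X),
      birkhoffSum T (fun y => f y - f (T y)) n x = f x - f (T^[n] x) := by
    intro n x
    induction n with
    | zero => simp [birkhoffSum_zero]
    | succ n ih =>
      rw [birkhoffSum_succ, ih, Function.iterate_succ_apply']
      ring
  have hae : ∀ᵐ x ∂μ, Tendsto (fun n : ℕ => f (T^[n] x) / n) atTop (𝓝 (-c)) := by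
    filter_upwards [htend] with x hx
    have heq : (fun n : ℕ => f (T^[n] x) / n)
        = fun n : ℕ => f x / n - birkhoffSum T (fun y => f y - f (T y)) n x / n := by
      funext n
      rw [htel n x]
      ring
    rw [heq]
    have := (tendsto_const_div_atTop_nhds_zero_nat (f x)).sub hx
    simpa using this
  have hc0 : c = 0 := by
    by_contra hcne
    have habs : 0 < |c| := abs_pos.2 hcne
    set ε : ℝ := |c| / 2 with hε
    have hεpos : 0 < ε := by positivity
    have hmeas : ∀ n : ℕ, AEStronglyMeasurable (fun x => f (T^[n] x) / (n : ℝ)) μ := fun n =>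
      ((hf.comp (hTm.measurable.iterate n)).div_const _).aestronglyMeasurable
    have hIM := tendstoInMeasure_of_tendsto_ae (g := fun _ => -c) hmeas hae
    have h1 := tendstoInMeasure_iff_dist.1 hIM ε hεpos
    set B : ℕ → Set X := fun n => {y | ε ≤ |f y / n + c|} with hB
    have hBmeas : ∀ n, MeasurableSet (B n) := fun n =>
      measurableSet_le measurable_const (((hf.div_const _).add_const c).abs)
    have hμeq : ∀ n : ℕ,
        μ {x | ε ≤ dist (f (T^[n] x) / (n : ℝ)) ((fun _ : X => -c) x)} = μ (B n) := by
      intro n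
      have hpre : {x | ε ≤ dist (f (T^[n] x) / (n : ℝ)) ((fun _ : X => -c) x)}
          = T^[n] ⁻¹' (B n) := by
        ext x
        simp [hB, Real.dist_eq, sub_neg_eq_add]
      rw [hpre]
      exact (hTm.iterate n).measure_preimage (hBmeas n).nullMeasurableSet
    have h1' : Tendsto (fun n => μ (B n)) atTop (𝓝 0) := h1.congr hμeq
    have hcsub : ∀ n : ℕ, 1 ≤ n → (B n)ᶜ ⊆ {y | (n : ℝ) * ε < |f y|} := by
      intro n hn x hx
      simp only [hB, mem_compl_iff, mem_setOf_eq, not_le] at hx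
      have hnpos : (0 : ℝ) < n := by exact_mod_cast hn
      have htri : |c| ≤ |f x / ↑n + c| + |f x| / ↑n := by
        have h := abs_add_le (f x / ↑n + c) (-(f x / ↑n))
        rw [abs_neg] at h
        have he : f x / ↑n + c + -(f x / ↑n) = c := by ring
        rw [he] at h
        have habsdiv : |f x / (n : ℝ)| = |f x| / n := by
          rw [abs_div, abs_of_pos hnpos]
        rwa [habsdiv] at h
      have h2 : ε < |f x| / n := by
        have hce : |c| = 2 * ε := by rw [hε]; ring
        rw [hce] at htri
        linarith
      rw [lt_div_iff₀ hnpos] at h2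
      simpa [mem_setOf_eq, mul_comm] using h2
    have hCmeas : ∀ n : ℕ, NullMeasurableSet {y | (n : ℝ) * ε < |f y|} μ := fun n =>
      (measurableSet_lt measurable_const hf.abs).nullMeasurableSet
    have hanti : Antitone (fun n : ℕ => {y | (n : ℝ) * ε < |f y|}) := by
      intro n m h x hx
      simp only [mem_setOf_eq] at hx ⊢
      have : (n : ℝ) * ε ≤ (m : ℝ) * ε :=
        mul_le_mul_of_nonneg_right (by exact_mod_cast h) hεpos.le
      linarith
    have hInter : (⋂ n : ℕ, {y | (n : ℝ) * ε < |f y|}) = ∅ := by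
      ext y
      simp only [mem_iInter, mem_setOf_eq, mem_empty_iff_false, iff_false, not_forall, not_lt]
      obtain ⟨n, hn⟩ := exists_nat_ge (|f y| / ε)
      refine ⟨n, ?_⟩
      rw [div_le_iff₀ hεpos] at hn
      linarith
    have hC : Tendsto (fun n : ℕ => μ {y | (n : ℝ) * ε < |f y|}) atTop (𝓝 0) := by
      have := tendsto_measure_iInter_atTop hCmeas hanti ⟨0, measure_ne_top μ _⟩
      rw [hInter, measure_empty] at this
      exact this
    have hcompl : Tendsto (fun n => μ (B n)ᶜ) atTop (𝓝 0) := by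
      refine tendsto_of_tendsto_of_tendsto_of_le_of_le' tendsto_const_nhds hC
        (Eventually.of_forall fun n => zero_le) ?_
      filter_upwards [eventually_ge_atTop 1] with n hn
      exact measure_mono (hcsub n hn)
    have hsum : Tendsto (fun n => μ (B n) + μ (B n)ᶜ) atTop (𝓝 0) := by
      simpa using h1'.add hcompl
    have hone : ∀ n, (1 : ℝ≥0∞) ≤ μ (B n) + μ (B n)ᶜ := fun n => by
      calc (1 : ℝ≥0∞) = μ (univ : Set X) := measure_univ.symm
        _ = μ (B n ∪ (B n)ᶜ) := by rw [union_compl_self]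
        _ ≤ μ (B n) + μ (B n)ᶜ := measure_union_le _ _
    obtain ⟨n, hn⟩ := (hsum.eventually_lt_const (show (0 : ℝ≥0∞) < 1 by norm_num)).exists
    exact absurd (hone n) (not_le.2 hn)
  filter_upwards [hae] with x hx
  simpa [hc0] using hx
end
end

section
/- Let $(X,\mu,T)$ be ergodic, $\epsilon > 0$ small enough, and $\Omega \subset X$ measurable with $\mu(\Omega) > 1 - \epsilon/4$. Then there exist a measurable set $\Omega_0 \subseteq \Omega$ with $\mu(\Omega_0) > 1-\epsilon$ and an integer $n_0$ such that for every $x \in \Omega_0$ there is an $\epsilon$-doubling sequence of integers $\{m_i\}_{i\geq 0}$ with $m_0 = n_0$ and $T^{m_i} x \in \Omega$ for all $i \geq 0$. -/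
open MeasureTheory Filter Topology

noncomputable section

namespace RecDoubling

variable {X : Type*} [MeasurableSpace X]

/-- Real-valued indicator of a set. -/
def ind (B : Set X) : X → ℝ := B.indicator (fun _ => (1 : ℝ))

lemma ind_nonneg (B : Set X) (x : X) : 0 ≤ ind B x := by
  by_cases h : x ∈ B <;> simp [ind, h]

lemma ind_le_one (B : Set X) (x : X) : ind B x ≤ 1 := by
  by_cases h : x ∈ B <;> simp [ind, h]

lemma ind_meas {B : Set X} (hB : MeasurableSet B) : Measurable (ind B) :=
  measurable_const.indicator hB

lemma ind_integrable (μ : Measure X) [IsProbabilityMeasure μ] {B : Set X}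
    (hB : MeasurableSet B) : Integrable (ind B) μ :=
  (integrable_const (1 : ℝ)).indicator hB

/-- Birkhoff sum of the indicator of `B`: number of `k < n` with `T^[k] x ∈ B`. -/
def S (T : X → X) (B : Set X) (n : ℕ) (x : X) : ℝ :=
  ∑ k ∈ Finset.range n, ind B (T^[k] x)

lemma S_zero (T : X → X) (B : Set X) (x : X) : S T B 0 x = 0 := by simp [S]

lemma S_succ' (T : X → X) (B : Set X) (n : ℕ) (x : X) :
    S T B (n + 1) x = ind B x + S T B n (T x) := by
  rw [S, Finset.sum_range_succ']
  simp [S, Function.iterate_succ_apply, add_comm]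

lemma S_nonneg (T : X → X) (B : Set X) (n : ℕ) (x : X) : 0 ≤ S T B n x :=
  Finset.sum_nonneg fun k _ => ind_nonneg B _

lemma S_meas {T : X → X} (hT : Measurable T) {B : Set X} (hB : MeasurableSet B) (n : ℕ) :
    Measurable (S T B n) :=
  Finset.measurable_sum _ fun k _ => (ind_meas hB).comp (hT.iterate k)

lemma S_integrable (μ : Measure X) [IsProbabilityMeasure μ] {T : X → X}
    (hpres : MeasurePreserving T μ μ) {B : Set X} (hB : MeasurableSet B) (n : ℕ) :
    Integrable (S T B n) μ := by
  refine integrable_finset_sum _ fun k _ => ?_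
  exact ((hpres.iterate k).integrable_comp (ind_integrable μ hB).1).2 (ind_integrable μ hB)

/-- Garsia's maximal function. -/
def M (T : X → X) (B : Set X) (q : ℝ) : ℕ → X → ℝ :=
  fun N => Nat.rec (fun _ => 0)
    (fun N MN x => max (MN x) (S T B (N + 1) x - q * ((N : ℝ) + 1))) N

lemma M_zero (T : X → X) (B : Set X) (q : ℝ) (x : X) : M T B q 0 x = 0 := rfl

lemma M_succ (T : X → X) (B : Set X) (q : ℝ) (N : ℕ) (x : X) :
    M T B q (N + 1) x = max (M T B q N x) (S T B (N + 1) x - q * ((N : ℝ) + 1)) := rfl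

lemma M_nonneg (T : X → X) (B : Set X) (q : ℝ) (N : ℕ) (x : X) : 0 ≤ M T B q N x := by
  induction N with
  | zero => exact le_of_eq (M_zero T B q x).symm
  | succ N ih => rw [M_succ]; exact le_trans ih (le_max_left _ _)

lemma M_mono (T : X → X) (B : Set X) (q : ℝ) {N N' : ℕ} (h : N ≤ N') (x : X) :
    M T B q N x ≤ M T B q N' x :=
  monotone_nat_of_le_succ (f := fun N => M T B q N x)
    (fun n => by show M T B q n x ≤ M T B q (n + 1) x
                 rw [M_succ]; exact le_max_left _ _) h

lemma Sg_le_M (T : X → X) (B : Set X) (q : ℝ) {n N : ℕ} (h : n ≤ N) (x : X) :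
    S T B n x - q * n ≤ M T B q N x := by
  induction N with
  | zero =>
      have : n = 0 := Nat.le_zero.mp h
      subst this; rw [S_zero, M_zero]; norm_num
  | succ N ih =>
      rcases Nat.lt_or_ge n (N + 1) with h' | h'
      · refine le_trans (ih (Nat.lt_succ_iff.mp h')) ?_
        rw [M_succ]; exact le_max_left _ _
      · have : n = N + 1 := le_antisymm h h'
        subst this
        rw [M_succ]; push_cast; exact le_max_right _ _

lemma M_meas {T : X → X} (hT : Measurable T) {B : Set X} (hB : MeasurableSet B) (q : ℝ)
    (N : ℕ) : Measurable (M T B q N) := by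
  induction N with
  | zero => exact measurable_const
  | succ N ih =>
      have : M T B q (N + 1) = fun x =>
          max (M T B q N x) (S T B (N + 1) x - q * ((N : ℝ) + 1)) := rfl
      rw [this]
      exact Measurable.max ih ((S_meas hT hB (N + 1)).sub measurable_const)

lemma M_integrable (μ : Measure X) [IsProbabilityMeasure μ] {T : X → X}
    (hpres : MeasurePreserving T μ μ) {B : Set X} (hB : MeasurableSet B) (q : ℝ) (N : ℕ) :
    Integrable (M T B q N) μ := by
  induction N with
  | zero =>
      have : M T B q 0 = fun _ : X => (0 : ℝ) := rfl
      rw [this]; exact integrable_const 0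
  | succ N ih =>
      have h := Integrable.sup ih ((S_integrable μ hpres hB (N + 1)).sub
        (integrable_const (q * ((N : ℝ) + 1))))
      exact h

lemma M_key (T : X → X) (B : Set X) (q : ℝ) (N : ℕ) (x : X) :
    M T B q N x ≤ max 0 (ind B x - q + M T B q N (T x)) := by
  induction N with
  | zero => rw [M_zero]; exact le_max_left 0 _
  | succ N ih =>
      rw [M_succ]
      refine max_le ?_ ?_
      · exact le_trans ih (max_le_max le_rfl
          (by have := M_mono T B q (Nat.le_succ N) (T x); linarith))
      · have h1 : S T B (N + 1) x - q * ((N : ℝ) + 1) =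
            (ind B x - q) + (S T B N (T x) - q * N) := by
          rw [S_succ']; push_cast; ring
        have h2 : S T B N (T x) - q * N ≤ M T B q (N + 1) (T x) :=
          Sg_le_M T B q (Nat.le_succ N) (T x)
        calc S T B (N + 1) x - q * ((N : ℝ) + 1)
            ≤ ind B x - q + M T B q (N + 1) (T x) := by rw [h1]; linarith
          _ ≤ max 0 _ := le_max_right _ _

/-- The maximal ergodic inequality (Garsia's proof). -/
lemma maximal (μ : Measure X) [IsProbabilityMeasure μ] {T : X → X}
    (hpres : MeasurePreserving T μ μ) {B : Set X} (hB : MeasurableSet B) {q : ℝ}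
    (hq : 0 < q) :
    μ {x | ∃ n, 0 < n ∧ q * n < S T B n x} ≤ ENNReal.ofReal ((μ B).toReal / q) := by
  classical
  set E : ℕ → Set X := fun N => {x | 0 < M T B q N x} with hE
  have hEmeas : ∀ N, MeasurableSet (E N) :=
    fun N => measurableSet_lt measurable_const (M_meas hpres.measurable hB q N)
  -- bound each μ (E N)
  have key : ∀ N, μ (E N) ≤ ENNReal.ofReal ((μ B).toReal / q) := by
    intro N
    have hMi := M_integrable μ hpres hB q N
    have hMTmeas : Measurable fun x => M T B q N (T x) :=
      (M_meas hpres.measurable hB q N).comp hpres.measurable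
    have hMTi : Integrable (fun x => M T B q N (T x)) μ :=
      (hpres.integrable_comp hMi.1).2 hMi
    have hinti : Integrable (fun x => ind B x - q) μ :=
      (ind_integrable μ hB).sub (integrable_const _)
    -- pointwise inequality on E N
    have hpt : ∀ x ∈ E N, M T B q N x - M T B q N (T x) ≤ ind B x - q := by
      intro x hx
      have h := M_key T B q N x
      rcases le_max_iff.mp h with h' | h'
      · exact absurd (lt_of_lt_of_le hx h') (lt_irrefl 0)
      · linarith
    have h1 : ∫ x in E N, (M T B q N x - M T B q N (T x)) ∂μ ≤
        ∫ x in E N, (ind B x - q) ∂μ := by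
      refine setIntegral_mono_on ((hMi.sub hMTi).integrableOn) (hinti.integrableOn)
        (hEmeas N) hpt
    -- ∫_{E N} M = ∫ M
    have h2 : ∫ x in E N, M T B q N x ∂μ = ∫ x, M T B q N x ∂μ := by
      have hcompl : ∫ x in (E N)ᶜ, M T B q N x ∂μ = 0 := by
        refine setIntegral_eq_zero_of_forall_eq_zero fun x hx => ?_
        have : ¬ (0 < M T B q N x) := hx
        exact le_antisymm (not_lt.mp this) (M_nonneg T B q N x)
      have := integral_add_compl (hEmeas N) hMi
      rw [hcompl] at this; linarith
    have h3 : ∫ x in E N, M T B q N (T x) ∂μ ≤ ∫ x, M T B q N (T x) ∂μ :=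
      setIntegral_le_integral hMTi (Filter.Eventually.of_forall fun x => M_nonneg T B q N (T x))
    have h4 : ∫ x, M T B q N (T x) ∂μ = ∫ x, M T B q N x ∂μ := by
      have := integral_map (μ := μ) hpres.measurable.aemeasurable
        (f := M T B q N) (M_meas hpres.measurable hB q N).aestronglyMeasurable
      rw [hpres.map_eq] at this
      exact this.symm
    have h5 : (0 : ℝ) ≤ ∫ x in E N, (M T B q N x - M T B q N (T x)) ∂μ := by
      rw [integral_sub (hMi.integrableOn) (hMTi.integrableOn)]
      have := h3.trans (le_of_eq h4)
      linarith [h2, this]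
    have h6 : ∫ x in E N, (ind B x - q) ∂μ =
        (∫ x in E N, ind B x ∂μ) - q * (μ (E N)).toReal := by
      rw [integral_sub ((ind_integrable μ hB).integrableOn) (integrableOn_const (measure_ne_top μ _))]
      rw [setIntegral_const, smul_eq_mul, measureReal_def]
      ring
    have h7 : ∫ x in E N, ind B x ∂μ ≤ (μ B).toReal := by
      have := setIntegral_le_integral (s := E N) (ind_integrable μ hB)
        (Filter.Eventually.of_forall fun x => ind_nonneg B x)
      rwa [show ∫ x, ind B x ∂μ = (μ B).toReal from integral_indicator_one hB] at this
    have h8 : q * (μ (E N)).toReal ≤ (μ B).toReal := by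
      have := le_trans h5 h1
      rw [h6] at this
      linarith
    have h9 : (μ (E N)).toReal ≤ (μ B).toReal / q := by
      rw [le_div_iff₀ hq]; linarith [h8]
    exact (ENNReal.le_ofReal_iff_toReal_le (measure_ne_top μ _)
      (div_nonneg ENNReal.toReal_nonneg hq.le)).2 h9
  -- the target set is contained in ⋃ N, E N
  have hsub : {x | ∃ n, 0 < n ∧ q * n < S T B n x} ⊆ ⋃ N, E N := by
    intro x hx
    obtain ⟨n, hn0, hn⟩ := hx
    refine Set.mem_iUnion.2 ⟨n, ?_⟩
    have := Sg_le_M T B q (le_refl n) x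
    simp only [hE, Set.mem_setOf_eq]
    linarith
  have hmono : Monotone E := by
    intro N N' h x hx
    exact lt_of_lt_of_le hx (M_mono T B q h x)
  calc μ {x | ∃ n, 0 < n ∧ q * n < S T B n x} ≤ μ (⋃ N, E N) := measure_mono hsub
    _ = ⨆ N, μ (E N) := hmono.directed_le.measure_iUnion
    _ ≤ ENNReal.ofReal ((μ B).toReal / q) := iSup_le key

/-- A.e. upper bound for the visit frequency, from the maximal inequality and ergodicity. -/
lemma ae_upper_density (μ : Measure X) [IsProbabilityMeasure μ] {T : X → X}
    (hT : Ergodic T μ) {B : Set X} (hB : MeasurableSet B) {a : ℝ}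
    (ha : (μ B).toReal < a) :
    ∀ᵐ x ∂μ, ∃ N : ℕ, ∀ n ≥ N, S T B n x ≤ a * n := by
  classical
  set c : ℝ := (μ B).toReal with hc
  have hc0 : 0 ≤ c := ENNReal.toReal_nonneg
  set c' : ℝ := (c + a) / 2 with hc'
  have hcc' : c < c' := by simp only [hc']; linarith
  have hc'a : c' < a := by simp only [hc']; linarith
  have hc'0 : 0 < c' := by linarith
  set r : ℕ → ℝ := fun k => c' + (a - c') / (k + 2) with hr
  have hr_gt : ∀ k, c' < r k := by
    intro k
    have : (0 : ℝ) < (a - c') / (k + 2) := by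
      apply div_pos (by linarith)
      positivity
    simp only [hr]; linarith
  have hr_lt : ∀ k, r k < a := by
    intro k
    have h2 : (2 : ℝ) ≤ (k : ℝ) + 2 := by
      have : (0:ℝ) ≤ (k:ℝ) := Nat.cast_nonneg k
      linarith
    have : (a - c') / ((k : ℝ) + 2) ≤ (a - c') / 2 :=
      div_le_div_of_nonneg_left (by linarith) (by norm_num) h2
    have h3 : (a - c') / 2 < a - c' := by linarith
    simp only [hr]; linarith
  have hr_dec : ∀ k, r (k + 1) < r k := by
    intro k
    have hk2 : (0:ℝ) < (k : ℝ) + 2 := by positivity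
    have hk3 : (0:ℝ) < (k : ℝ) + 3 := by positivity
    have : (a - c') / ((k : ℝ) + 3) < (a - c') / ((k : ℝ) + 2) := by
      apply div_lt_div_of_pos_left (by linarith) hk2 (by linarith)
    simp only [hr]
    push_cast
    convert (add_lt_add_iff_left c').2 this using 2 <;> ring
  -- the good sets
  set G : ℝ → Set X := fun ρ => {x | ∃ N : ℕ, ∀ n ≥ N, S T B n x ≤ ρ * n} with hG
  have hGmeas : ∀ ρ, MeasurableSet (G ρ) := by
    intro ρ
    have : G ρ = ⋃ N : ℕ, ⋂ n : ℕ, {x | N ≤ n → S T B n x ≤ ρ * n} := by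
      ext x; simp [hG, Set.mem_iUnion, Set.mem_iInter]
    rw [this]
    refine MeasurableSet.iUnion fun N => MeasurableSet.iInter fun n => ?_
    by_cases h : N ≤ n
    · simp only [h, true_implies]
      exact measurableSet_le (S_meas hT.measurable hB n) measurable_const
    · simp only [h, false_implies]
      exact MeasurableSet.univ.congr (by ext x; simp)
  have hGmono : ∀ {ρ ρ' : ℝ}, ρ ≤ ρ' → G ρ ⊆ G ρ' := by
    intro ρ ρ' h x hx
    obtain ⟨N, hN⟩ := hx
    exact ⟨N, fun n hn => le_trans (hN n hn) (by
      have : (0:ℝ) ≤ (n:ℝ) := Nat.cast_nonneg n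
      nlinarith)⟩
  -- Claim 1 : T ⁻¹' (G ρ') ⊆ G ρ for 0 ≤ ρ' < ρ
  have claim1 : ∀ ρ' ρ : ℝ, 0 ≤ ρ' → ρ' < ρ → T ⁻¹' (G ρ') ⊆ G ρ := by
    intro ρ' ρ hρ'0 hlt x hx
    obtain ⟨N, hN⟩ := hx
    obtain ⟨n₁, hn₁⟩ := exists_nat_ge (1 / (ρ - ρ'))
    refine ⟨max (N + 1) (n₁ + 1), fun n hn => ?_⟩
    obtain ⟨m, rfl⟩ : ∃ m, n = m + 1 := by
      refine ⟨n - 1, ?_⟩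
      have : 1 ≤ n := le_trans (le_trans (Nat.le_add_left 1 N) (le_max_left _ _)) hn
      omega
    have hmN : m ≥ N := by
      have := le_trans (le_max_left (N+1) (n₁+1)) hn; omega
    have hmn₁ : (n₁ : ℝ) ≤ (m : ℝ) := by
      have := le_trans (le_max_right (N+1) (n₁+1)) hn
      exact_mod_cast by omega
    have h1 : S T B m (T x) ≤ ρ' * m := hN m hmN
    have h2 : S T B (m + 1) x = ind B x + S T B m (T x) := S_succ' T B m x
    have h3 : ind B x ≤ 1 := ind_le_one B x
    have h4 : 1 ≤ (ρ - ρ') * m := by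
      have hρ : 0 < ρ - ρ' := by linarith
      have : 1 / (ρ - ρ') ≤ (m : ℝ) := le_trans hn₁ hmn₁
      rw [div_le_iff₀ hρ] at this
      linarith [this]
    have : S T B (m+1) x ≤ 1 + ρ' * m := by rw [h2]; linarith
    have hρ0 : 0 < ρ := by linarith
    push_cast
    nlinarith
  -- Claim 2 : G ρ' ⊆ T ⁻¹' (G ρ) for 0 ≤ ρ' < ρ
  have claim2 : ∀ ρ' ρ : ℝ, 0 ≤ ρ' → ρ' < ρ → G ρ' ⊆ T ⁻¹' (G ρ) := by
    intro ρ' ρ hρ'0 hlt x hx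
    obtain ⟨N, hN⟩ := hx
    obtain ⟨n₂, hn₂⟩ := exists_nat_ge (ρ' / (ρ - ρ'))
    refine ⟨max N n₂, fun n hn => ?_⟩
    have hnN : n ≥ N := le_trans (le_max_left _ _) hn
    have hnn₂ : (n₂ : ℝ) ≤ (n : ℝ) := by exact_mod_cast le_trans (le_max_right _ _) hn
    have h1 : S T B (n + 1) x ≤ ρ' * (n + 1) := by
      have := hN (n+1) (by omega)
      push_cast at this ⊢; linarith
    have h2 : S T B (n + 1) x = ind B x + S T B n (T x) := S_succ' T B n x
    have h3 : 0 ≤ ind B x := ind_nonneg B x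
    have h4 : ρ' ≤ (ρ - ρ') * n := by
      have hρ : 0 < ρ - ρ' := by linarith
      have : ρ' / (ρ - ρ') ≤ (n : ℝ) := le_trans hn₂ hnn₂
      rw [div_le_iff₀ hρ] at this
      linarith
    have : S T B n (T x) ≤ ρ' * (n + 1) := by linarith
    nlinarith
  -- the invariant set
  set H : Set X := ⋂ k : ℕ, G (r k) with hH
  have hHmeas : MeasurableSet H := MeasurableSet.iInter fun k => hGmeas (r k)
  have hHinv : T ⁻¹' H = H := by
    apply Set.Subset.antisymm
    · intro x hx
      refine Set.mem_iInter.2 fun k => ?_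
      have h1 : T x ∈ G (r (k + 1)) := Set.mem_iInter.1 (Set.mem_preimage.1 hx) (k + 1)
      exact claim1 (r (k+1)) (r k) (le_of_lt (lt_trans hc'0 (hr_gt (k+1)))) (hr_dec k)
        (Set.mem_preimage.2 h1)
    · intro x hx
      refine Set.mem_preimage.2 (Set.mem_iInter.2 fun k => ?_)
      have h1 : x ∈ G (r (k + 1)) := Set.mem_iInter.1 hx (k + 1)
      exact Set.mem_preimage.1
        (claim2 (r (k+1)) (r k) (le_of_lt (lt_trans hc'0 (hr_gt (k+1)))) (hr_dec k) h1)
  -- zero-one law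
  rcases hT.toPreErgodic.measure_self_or_compl_eq_zero hHmeas hHinv with h0 | h1
  · -- impossible : μ Hᶜ would exceed the maximal bound
    exfalso
    have hsub : Hᶜ ⊆ {x | ∃ n, 0 < n ∧ c' * n < S T B n x} := by
      intro x hx
      have hx' : ¬ ∀ k : ℕ, x ∈ G (r k) := fun h => hx (Set.mem_iInter.2 h)
      push_neg at hx'
      obtain ⟨k, hk⟩ := hx'
      have hk' : ¬ ∃ N : ℕ, ∀ n ≥ N, S T B n x ≤ r k * n := hk
      push_neg at hk'
      obtain ⟨n, hn1, hn2⟩ := hk' 1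
      refine ⟨n, by omega, ?_⟩
      have : c' * n ≤ r k * n := by
        have := (hr_gt k).le
        have hn0 : (0:ℝ) ≤ (n:ℝ) := Nat.cast_nonneg n
        nlinarith
      linarith
    have hmax := maximal μ hT.toMeasurePreserving hB hc'0
    have hHc : μ Hᶜ = 1 := by
      have := prob_compl_eq_one_sub (μ := μ) hHmeas
      rw [this, h0]; simp
    have : (1 : ENNReal) ≤ ENNReal.ofReal (c / c') := by
      rw [← hHc]
      exact le_trans (measure_mono hsub) hmax
    have hlt1 : c / c' < 1 := (div_lt_one hc'0).2 hcc'
    have := (ENNReal.one_le_ofReal).1 this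
    linarith
  · -- μ Hᶜ = 0 : almost every point is in H ⊆ G (r 0) ⊆ goal
    have : ∀ᵐ x ∂μ, x ∈ H := by
      rw [ae_iff]
      exact h1
    filter_upwards [this] with x hx
    have hx0 : x ∈ G (r 0) := by
      simp only [hH, Set.mem_iInter] at hx
      exact hx 0
    obtain ⟨N, hN⟩ := hx0
    refine ⟨N, fun n hn => ?_⟩
    refine le_trans (hN n hn) ?_
    have : r 0 ≤ a := (hr_lt 0).le
    have hn0 : (0:ℝ) ≤ (n:ℝ) := Nat.cast_nonneg n
    nlinarith

end RecDoubling

open RecDoubling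

/-- Let `(X, μ, T)` be ergodic. For `ε > 0` small enough and any measurable `Ω ⊆ X`
with `μ(Ω) > 1 - ε/4`, there exist a measurable `Ω₀ ⊆ Ω` with `μ(Ω₀) > 1 - ε` and an
integer `n₀` such that for every `x ∈ Ω₀` there is an `ε`-doubling sequence of
integers `{m_i}` (i.e. `|m_i - 2 m_{i-1}| < ε m_i` for all `i ≥ 1`) with `m₀ = n₀`
and `T^{m_i} x ∈ Ω` for all `i ≥ 0`. -/
theorem exists_recurrent_doubling_sequence
    {X : Type*} [MeasurableSpace X] (μ : Measure X) [IsProbabilityMeasure μ]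
    (T : X → X) (hT : Ergodic T μ) :
    ∃ ε₀ : ℝ, 0 < ε₀ ∧ ∀ ε : ℝ, 0 < ε → ε ≤ ε₀ →
      ∀ Ω : Set X, MeasurableSet Ω → 1 - ENNReal.ofReal (ε / 4) < μ Ω →
        ∃ Ω₀ : Set X, MeasurableSet Ω₀ ∧ Ω₀ ⊆ Ω ∧ 1 - ENNReal.ofReal ε < μ Ω₀ ∧
          ∃ n₀ : ℕ, ∀ x ∈ Ω₀, ∃ mseq : ℕ → ℕ, mseq 0 = n₀ ∧
            (∀ i, 1 ≤ i → |(mseq i : ℝ) - 2 * (mseq (i - 1) : ℝ)| < ε * (mseq i : ℝ)) ∧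
            (∀ i, T^[mseq i] x ∈ Ω) := by
  classical
  refine ⟨1/2, by norm_num, ?_⟩
  intro ε hε hε2 Ω hΩ hΩμ
  set B : Set X := Ωᶜ with hBdef
  have hB : MeasurableSet B := hΩ.compl
  have hd1 : ENNReal.ofReal (ε / 4) ≤ 1 := by
    rw [show (1 : ENNReal) = ENNReal.ofReal 1 from (ENNReal.ofReal_one).symm]
    exact ENNReal.ofReal_le_ofReal (by linarith)
  -- μ B < ofReal (ε/4)
  have hμBc : μ B < ENNReal.ofReal (ε / 4) := by
    have h1 : μ B = 1 - μ Ω := prob_compl_eq_one_sub hΩ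
    have h2 : (1 : ENNReal) = (1 - ENNReal.ofReal (ε / 4)) + ENNReal.ofReal (ε / 4) :=
      (tsub_add_cancel_of_le hd1).symm
    have h3 : (1 : ENNReal) < μ Ω + ENNReal.ofReal (ε / 4) := by
      calc (1 : ENNReal) = (1 - ENNReal.ofReal (ε / 4)) + ENNReal.ofReal (ε / 4) := h2
        _ < μ Ω + ENNReal.ofReal (ε / 4) :=
            ENNReal.add_lt_add_right ENNReal.ofReal_ne_top hΩμ
    rw [h1]
    exact (ENNReal.sub_lt_iff_lt_right (measure_ne_top μ Ω) prob_le_one).2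
      (by rwa [add_comm] at h3)
  have hμB : (μ B).toReal < ε / 4 :=
    (ENNReal.lt_ofReal_iff_toReal_lt (measure_ne_top μ B)).1 hμBc
  have hμB3 : (μ B).toReal < ε / 3 := by linarith
  -- a.e. upper density
  have hae := ae_upper_density μ hT hB hμB3
  -- the good sets
  set GN : ℕ → Set X := fun N => {x | ∀ n ≥ N, S T B n x ≤ ε / 3 * n} with hGN
  have hGNmeas : ∀ N, MeasurableSet (GN N) := by
    intro N
    have : GN N = ⋂ n : ℕ, {x | N ≤ n → S T B n x ≤ ε / 3 * n} := by
      ext x; simp [hGN, Set.mem_iInter]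
    rw [this]
    refine MeasurableSet.iInter fun n => ?_
    by_cases h : N ≤ n
    · simp only [h, true_implies]
      exact measurableSet_le (S_meas hT.measurable hB n) measurable_const
    · simp only [h, false_implies]
      exact MeasurableSet.univ.congr (by ext x; simp)
  have hGNmono : Monotone GN := fun a b hab x hx n hn => hx n (le_trans hab hn)
  -- choose N₁
  have h0 : μ (⋂ N, (GN N)ᶜ) = 0 := by
    have he : (⋂ N, (GN N)ᶜ) = (⋃ N, GN N)ᶜ := (Set.compl_iUnion _).symm
    rw [he]
    have hae' : ∀ᵐ x ∂μ, x ∈ ⋃ N, GN N := by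
      filter_upwards [hae] with x hx
      obtain ⟨N, hN⟩ := hx
      exact Set.mem_iUnion.2 ⟨N, hN⟩
    rw [ae_iff] at hae'
    exact hae'
  have hanti : Antitone fun N => (GN N)ᶜ :=
    fun a b hab => Set.compl_subset_compl.2 (hGNmono hab)
  have ht : Tendsto (fun N => μ ((GN N)ᶜ)) atTop (𝓝 0) := by
    have := tendsto_measure_iInter_atTop (μ := μ)
      (fun N => (hGNmeas N).compl.nullMeasurableSet) hanti ⟨0, measure_ne_top μ _⟩
    rw [h0] at this
    exact this
  have hev : ∀ᶠ N in atTop, μ ((GN N)ᶜ) < ENNReal.ofReal (ε / 4) :=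
    ht.eventually_lt_const (ENNReal.ofReal_pos.2 (by linarith))
  obtain ⟨N₁, hN₁⟩ := hev.exists
  set n₀ : ℕ := max N₁ 1 with hn₀
  have hn₀1 : 1 ≤ n₀ := le_max_right _ _
  have hn₀N : N₁ ≤ n₀ := le_max_left _ _
  set P : Set X := T^[n₀] ⁻¹' Ω with hP
  have hPmeas : MeasurableSet P := (hT.measurable.iterate n₀) hΩ
  have hμPc : μ Pᶜ < ENNReal.ofReal (ε / 4) := by
    have : Pᶜ = T^[n₀] ⁻¹' B := by rw [hP, ← Set.preimage_compl]
    rw [this, (hT.toMeasurePreserving.iterate n₀).measure_preimage hB.nullMeasurableSet]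
    exact hμBc
  refine ⟨Ω ∩ GN N₁ ∩ P, (hΩ.inter (hGNmeas N₁)).inter hPmeas, fun x hx => hx.1.1, ?_, n₀, ?_⟩
  · -- measure bound
    set Ω₀ : Set X := Ω ∩ GN N₁ ∩ P with hΩ₀
    have hΩ₀meas : MeasurableSet Ω₀ := (hΩ.inter (hGNmeas N₁)).inter hPmeas
    have hsub : Ω₀ᶜ ⊆ (Ωᶜ ∪ (GN N₁)ᶜ) ∪ Pᶜ := by
      intro y hy
      by_cases h1 : y ∈ Ω
      · by_cases h2 : y ∈ GN N₁
        · by_cases h3 : y ∈ P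
          · exact absurd ⟨⟨h1, h2⟩, h3⟩ hy
          · exact Or.inr h3
        · exact Or.inl (Or.inr h2)
      · exact Or.inl (Or.inl h1)
    have hcompl : μ Ω₀ᶜ < ENNReal.ofReal ε := by
      calc μ Ω₀ᶜ ≤ μ (Ωᶜ ∪ (GN N₁)ᶜ) + μ Pᶜ :=
            le_trans (measure_mono hsub) (measure_union_le _ _)
        _ ≤ (μ Ωᶜ + μ (GN N₁)ᶜ) + μ Pᶜ :=
            add_le_add (measure_union_le _ _) le_rfl
        _ < (ENNReal.ofReal (ε / 4) + ENNReal.ofReal (ε / 4)) + ENNReal.ofReal (ε / 4) := by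
            refine ENNReal.add_lt_add (ENNReal.add_lt_add hμBc hN₁) hμPc
        _ = ENNReal.ofReal (ε / 4 + ε / 4 + ε / 4) := by
            rw [ENNReal.ofReal_add (by linarith) (by linarith),
              ENNReal.ofReal_add (by linarith) (by linarith)]
        _ < ENNReal.ofReal ε := ENNReal.ofReal_lt_ofReal_iff (by linarith) |>.2 (by linarith)
    have hεle1 : ENNReal.ofReal ε ≤ 1 := by
      rw [show (1 : ENNReal) = ENNReal.ofReal 1 from (ENNReal.ofReal_one).symm]
      exact ENNReal.ofReal_le_ofReal (by linarith)
    refine (ENNReal.sub_lt_iff_lt_right ENNReal.ofReal_ne_top hεle1).2 ?_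
    calc (1 : ENNReal) = μ Ω₀ + μ Ω₀ᶜ := by
          rw [measure_add_measure_compl hΩ₀meas, measure_univ]
      _ < μ Ω₀ + ENNReal.ofReal ε := ENNReal.add_lt_add_left (measure_ne_top μ _) hcompl
  · -- the doubling sequence
    rintro x ⟨⟨hxΩ, hxG⟩, hxP⟩
    have hxG' : ∀ n ≥ N₁, S T B n x ≤ ε / 3 * n := hxG
    -- one step of the construction
    have step : ∀ m : ℕ, n₀ ≤ m → ∃ k : ℕ, 2 * m ≤ k ∧ ((k : ℝ) < 2 * m + ε * m) ∧
        n₀ ≤ k ∧ T^[k] x ∈ Ω := by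
      intro m hm
      have hm1 : 1 ≤ m := le_trans hn₀1 hm
      have hm1' : (1 : ℝ) ≤ (m : ℝ) := by exact_mod_cast hm1
      have hεm : 0 < ε * m := mul_pos hε (by linarith)
      set w : ℕ := ⌈ε * m⌉₊ with hw
      have hw1 : 0 < w := Nat.ceil_pos.2 hεm
      have hwge : ε * m ≤ (w : ℝ) := Nat.le_ceil _
      have hwlt : (w : ℝ) < ε * m + 1 := Nat.ceil_lt_add_one hεm.le
      have hgood : ∃ k ∈ Finset.Ico (2 * m) (2 * m + w), T^[k] x ∈ Ω := by
        by_contra hcon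
        push_neg at hcon
        have hbound : (w : ℝ) ≤ S T B (2 * m + w) x := by
          have hsubset : Finset.Ico (2 * m) (2 * m + w) ⊆ Finset.range (2 * m + w) := by
            intro k hk
            simp only [Finset.mem_Ico] at hk
            exact Finset.mem_range.2 hk.2
          have h1 : ∀ k ∈ Finset.Ico (2 * m) (2 * m + w), ind B (T^[k] x) = 1 := by
            intro k hk
            have : T^[k] x ∈ B := hcon k hk
            simp [ind, Set.indicator_of_mem this]
          calc (w : ℝ) = ∑ k ∈ Finset.Ico (2 * m) (2 * m + w), (1 : ℝ) := by
                simp [Nat.add_sub_cancel_left]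
            _ = ∑ k ∈ Finset.Ico (2 * m) (2 * m + w), ind B (T^[k] x) :=
                (Finset.sum_congr rfl h1).symm
            _ ≤ S T B (2 * m + w) x := by
                refine Finset.sum_le_sum_of_subset_of_nonneg hsubset
                  fun k _ _ => ind_nonneg B _
        have hbn : N₁ ≤ 2 * m + w := by omega
        have hup := hxG' (2 * m + w) hbn
        push_cast at hup
        have hwpos : (0 : ℝ) < w := by exact_mod_cast hw1
        nlinarith
      obtain ⟨k, hk, hkΩ⟩ := hgood
      simp only [Finset.mem_Ico] at hk
      refine ⟨k, hk.1, ?_, by omega, hkΩ⟩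
      have : (k : ℝ) ≤ 2 * m + w - 1 := by
        have : k ≤ 2 * m + w - 1 := by omega
        have h2 : ((2 * m + w - 1 : ℕ) : ℝ) = 2 * (m : ℝ) + w - 1 := by
          have : 1 ≤ 2 * m + w := by omega
          push_cast [Nat.cast_sub this]; ring
        calc (k : ℝ) ≤ ((2 * m + w - 1 : ℕ) : ℝ) := by exact_mod_cast this
          _ = 2 * (m : ℝ) + w - 1 := h2
      linarith
    -- iterate
    have step' : ∀ g : {m : ℕ // n₀ ≤ m ∧ T^[m] x ∈ Ω},
        ∃ g' : {m : ℕ // n₀ ≤ m ∧ T^[m] x ∈ Ω},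
          2 * g.1 ≤ g'.1 ∧ ((g'.1 : ℝ) < 2 * g.1 + ε * g.1) := by
      rintro ⟨m, hm, _⟩
      obtain ⟨k, h1, h2, h3, h4⟩ := step m hm
      exact ⟨⟨k, h3, h4⟩, h1, h2⟩
    choose nxt hnxt1 hnxt2 using step'
    set g0 : {m : ℕ // n₀ ≤ m ∧ T^[m] x ∈ Ω} := ⟨n₀, le_refl _, hxP⟩ with hg0
    set seq : ℕ → {m : ℕ // n₀ ≤ m ∧ T^[m] x ∈ Ω} := fun i => nxt^[i] g0 with hseq
    refine ⟨fun i => (seq i).1, rfl, ?_, fun i => (seq i).2.2⟩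
    intro i hi
    obtain ⟨j, rfl⟩ : ∃ j, i = j + 1 := ⟨i - 1, by omega⟩
    have he : seq (j + 1) = nxt (seq j) := Function.iterate_succ_apply' nxt j g0
    set m : ℕ := (seq j).1 with hm
    set k : ℕ := (seq (j + 1)).1 with hk
    have h1 : 2 * m ≤ k := by rw [hk, he]; exact hnxt1 (seq j)
    have h2 : (k : ℝ) < 2 * m + ε * m := by rw [hk, he]; exact hnxt2 (seq j)
    have hm1 : 1 ≤ m := le_trans hn₀1 (seq j).2.1
    have hj : j + 1 - 1 = j := by omega
    rw [hj]
    have h1' : 2 * (m : ℝ) ≤ (k : ℝ) := by exact_mod_cast h1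
    have hmk : (m : ℝ) ≤ (k : ℝ) := by
      have : m ≤ k := le_trans (by omega) h1
      exact_mod_cast this
    rw [abs_of_nonneg (by linarith)]
    have : ε * m ≤ ε * k := mul_le_mul_of_nonneg_left hmk hε.le
    linarith
end
end
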